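/- arXiv:1007.4509 — 4 statements merged into one kernel-verified Lean document; each statement's English description precedes it below -/
import Mathlib

section
/- Let φ : [0,∞) → [0,1] be a Laplace transform of a probability distribution on [0,∞) and suppose φ(t) ≤ E ∏_{|v|=n} φ(L(v)t) for all t ≥ 0 and n ≥ 0, where summation/products range over vertices with L(v)>0. Suppose the maximal weight L_n* := sup_{|v|=n} L(v) converges almost surely to a finite limit L*_∞. Then for all t > 0, φ(t) ≤ E exp( −t · D_1(L*_∞ t) · W^{(1)} ), where D_1(s) = (1−φ(s))/s (with D_1(0) = lim_{s↓0} D_1(s)), W^{(1)} = liminf_n Σ_{|v|=n} L(v), and the convention 0·∞ := 0 is used. -/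
open MeasureTheory ProbabilityTheory ENNReal NNReal Filter

noncomputable section

abbrev UHTree := List ℕ

/-- The branch weight `L(v)`: `L(∅) = 1`, `L(vi) = L(v) T_i(v)`. -/
def branchL {Ω : Type*} : (UHTree → ℕ → Ω → ℝ≥0∞) → UHTree → Ω → ℝ≥0∞
  | _, [], _ => 1
  | T, i :: v, ω => T (.nil) i ω * branchL (fun u j => T (i :: u) j) v ω

/-- The random pair `(C(v), T(v))` attached to vertex `v`. -/
def pairRV {Ω : Type*} (C : UHTree → Ω → ℝ≥0∞) (T : UHTree → ℕ → Ω → ℝ≥0∞) (v : UHTree)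
    (ω : Ω) : ℝ≥0∞ × (ℕ → ℝ≥0∞) :=
  (C v ω, fun i => T v i ω)

/-- `e^{-y}` for `y ∈ [0,∞]`, with `e^{-∞} = 0`. -/
def eexp (y : ℝ≥0∞) : ℝ := if y = ∞ then 0 else Real.exp (-y.toReal)

/-- The multiplicative martingale
`M_n(t) = exp(-t Σ_{|u|<n} L(u)C(u)) ∏_{|v|=n} ψ(L(v)t)`. -/
def multMart {Ω : Type*} (C : UHTree → Ω → ℝ≥0∞) (T : UHTree → ℕ → Ω → ℝ≥0∞)
    (ψ : ℝ≥0∞ → ℝ) (n : ℕ) (t : ℝ≥0) (ω : Ω) : ℝ :=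
  eexp ((t : ℝ≥0∞) * ∑' u : {u : UHTree // u.length < n}, branchL T u ω * C u ω) *
    ∏' v : {v : UHTree // v.length = n}, ψ (branchL T v ω * t)

/-- The σ-algebra generated by the weights attached to vertices of length `< n`. -/
def treeFiltration {Ω : Type*} (C : UHTree → Ω → ℝ≥0∞) (T : UHTree → ℕ → Ω → ℝ≥0∞)
    (n : ℕ) : MeasurableSpace Ω :=
  ⨆ v : {v : UHTree // v.length < n}, MeasurableSpace.comap (pairRV C T v) inferInstance

/-- Maximal branch weight in generation `n`. -/
def Lstar {Ω : Type*} (T : UHTree → ℕ → Ω → ℝ≥0∞) (n : ℕ) (ω : Ω) : ℝ≥0∞ :=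
  ⨆ v : {v : UHTree // v.length = n}, branchL T v ω

/-- `W^{(1)} = liminf_n Σ_{|v|=n} L(v)`. -/
def Wone {Ω : Type*} (T : UHTree → ℕ → Ω → ℝ≥0∞) (ω : Ω) : ℝ≥0∞ :=
  liminf (fun n => ∑' v : {v : UHTree // v.length = n}, branchL T v ω) atTop

/-! ### Auxiliary lemmas on `eexp` -/

lemma eexp_nonneg (y : ℝ≥0∞) : 0 ≤ eexp y := by
  unfold eexp; split
  · exact le_refl _
  · exact (Real.exp_pos _).le

lemma eexp_le_one (y : ℝ≥0∞) : eexp y ≤ 1 := by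
  unfold eexp; split
  · norm_num
  · exact Real.exp_le_one_iff.2 (by simp [ENNReal.toReal_nonneg])

lemma eexp_top : eexp ∞ = 0 := by simp [eexp]

lemma eexp_ne_top {y : ℝ≥0∞} (h : y ≠ ∞) : eexp y = Real.exp (-y.toReal) := by
  simp [eexp, h]

lemma eexp_antitone : Antitone eexp := by
  intro y z h
  by_cases hz : z = ∞
  · subst hz; rw [eexp_top]; exact eexp_nonneg y
  · have hy : y ≠ ∞ := fun hy => hz (top_le_iff.1 (hy ▸ h))
    rw [eexp_ne_top hz, eexp_ne_top hy]
    exact Real.exp_le_exp.2 (neg_le_neg (ENNReal.toReal_mono hz h))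

lemma measurable_eexp : Measurable eexp := by
  unfold eexp
  exact Measurable.ite (measurableSet_singleton _) measurable_const
    ((Real.measurable_exp.comp measurable_neg).comp ENNReal.measurable_toReal)

lemma continuous_eexp : Continuous eexp := by
  rw [continuous_iff_continuousAt]
  intro y
  by_cases hy : y = ∞
  · subst hy
    have : Tendsto eexp (nhds ⊤) (nhds 0) := by
      rw [NormedAddCommGroup.tendsto_nhds_zero]
      intro ε hε
      set M : ℝ := max 0 (1 - Real.log ε) with hM
      have hM0 : 0 ≤ M := le_max_left _ _
      have hMε : Real.exp (-M) < ε := by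
        rcases le_total (1 - Real.log ε) 0 with h | h
        · rw [hM, max_eq_left h]
          have h1 : (2:ℝ) ≤ Real.exp 1 := by have := Real.add_one_le_exp 1; linarith
          have h2 := Real.exp_le_exp.2 (by linarith : (1:ℝ) ≤ Real.log ε)
          rw [Real.exp_log hε] at h2
          simp only [neg_zero, Real.exp_zero]
          linarith
        · rw [hM, max_eq_right h, show -(1 - Real.log ε) = Real.log ε + (-1) by ring,
            Real.exp_add, Real.exp_log hε]
          nlinarith [Real.exp_pos (-1), Real.exp_lt_one_iff.2 (by norm_num : (-1:ℝ) < 0)]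
      have hmem : Set.Ioi (ENNReal.ofReal M) ∈ nhds (⊤:ℝ≥0∞) :=
        IsOpen.mem_nhds isOpen_Ioi (by simp [lt_top_iff_ne_top])
      filter_upwards [hmem] with z hz
      rw [Real.norm_eq_abs, abs_of_nonneg (eexp_nonneg z)]
      by_cases hz' : z = ∞
      · rw [hz', eexp_top]; exact hε
      · rw [eexp_ne_top hz']
        refine lt_of_le_of_lt ?_ hMε
        refine Real.exp_le_exp.2 (neg_le_neg ?_)
        calc M = (ENNReal.ofReal M).toReal := (ENNReal.toReal_ofReal hM0).symm
        _ ≤ z.toReal := ENNReal.toReal_mono hz' hz.le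
    simpa [ContinuousAt, eexp_top] using this
  · have h1 : ∀ᶠ z in nhds y, z ≠ ∞ := by
      have : Set.Iio ∞ ∈ nhds y := IsOpen.mem_nhds isOpen_Iio (lt_top_iff_ne_top.2 hy)
      filter_upwards [this] with z hz using ne_top_of_lt hz
    have h2 : ContinuousAt (fun z => Real.exp (-z.toReal)) y :=
      (Real.continuous_exp.continuousAt).comp
        ((continuousAt_neg).comp (ENNReal.tendsto_toReal hy))
    refine h2.congr ?_
    filter_upwards [h1] with z hz using (eexp_ne_top hz).symm

/-! ### Infinite products of numbers in `[0,1]` -/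

lemma tprod_le_eexp {ι : Type*} [Countable ι] (a : ι → ℝ) (h0 : ∀ i, 0 ≤ a i)
    (h1 : ∀ i, a i ≤ 1) : ∏' i, a i ≤ eexp (∑' i, ENNReal.ofReal (1 - a i)) := by
  classical
  have hanti : Antitone (fun F : Finset ι => ∏ i ∈ F, a i) := by
    intro F G hFG
    simp only []
    rw [← Finset.prod_sdiff hFG]
    exact mul_le_of_le_one_left (Finset.prod_nonneg fun i _ => h0 i)
      (Finset.prod_le_one (fun i _ => h0 i) (fun i _ => h1 i))
  have hbdd : BddBelow (Set.range fun F : Finset ι => ∏ i ∈ F, a i) := by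
    refine ⟨0, ?_⟩
    rintro x ⟨F, rfl⟩
    exact Finset.prod_nonneg fun i _ => h0 i
  have hprod : HasProd a (⨅ F : Finset ι, ∏ i ∈ F, a i) := tendsto_atTop_ciInf hanti hbdd
  have hsum : HasSum (fun i => ENNReal.ofReal (1 - a i))
      (∑' i, ENNReal.ofReal (1 - a i)) := ENNReal.summable.hasSum
  have htend2 : Tendsto (fun F : Finset ι => eexp (∑ i ∈ F, ENNReal.ofReal (1 - a i)))
      atTop (nhds (eexp (∑' i, ENNReal.ofReal (1 - a i)))) :=
    (continuous_eexp.continuousAt).tendsto.comp hsum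
  have hFle : ∀ F : Finset ι, ∏ i ∈ F, a i ≤ eexp (∑ i ∈ F, ENNReal.ofReal (1 - a i)) := by
    intro F
    rw [← ENNReal.ofReal_sum_of_nonneg (fun i _ => by linarith [h1 i]),
      eexp_ne_top ENNReal.ofReal_ne_top,
      ENNReal.toReal_ofReal (Finset.sum_nonneg fun i _ => by linarith [h1 i]),
      ← Finset.sum_neg_distrib]
    rw [Real.exp_sum]
    refine Finset.prod_le_prod (fun i _ => h0 i) (fun i _ => ?_)
    have := Real.add_one_le_exp (-(1 - a i))
    linarith
  rw [hprod.tprod_eq]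
  exact le_of_tendsto_of_tendsto' hprod htend2 hFle

lemma tprod_nonneg' {ι : Type*} [Countable ι] (a : ι → ℝ) (h0 : ∀ i, 0 ≤ a i)
    (h1 : ∀ i, a i ≤ 1) : 0 ≤ ∏' i, a i := by
  classical
  have hanti : Antitone (fun F : Finset ι => ∏ i ∈ F, a i) := by
    intro F G hFG
    simp only []
    rw [← Finset.prod_sdiff hFG]
    exact mul_le_of_le_one_left (Finset.prod_nonneg fun i _ => h0 i)
      (Finset.prod_le_one (fun i _ => h0 i) (fun i _ => h1 i))
  have hbdd : BddBelow (Set.range fun F : Finset ι => ∏ i ∈ F, a i) := by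
    refine ⟨0, ?_⟩
    rintro x ⟨F, rfl⟩
    exact Finset.prod_nonneg fun i _ => h0 i
  have hprod : HasProd a (⨅ F : Finset ι, ∏ i ∈ F, a i) := tendsto_atTop_ciInf hanti hbdd
  rw [hprod.tprod_eq]
  exact ge_of_tendsto' hprod fun F => Finset.prod_nonneg fun i _ => h0 i

/-! ### Basic properties of the Laplace transform `φ` -/

section phi
variable {P : Measure ℝ≥0∞} [IsProbabilityMeasure P] {φ : ℝ≥0∞ → ℝ}

lemma integrable_eexp_mul (y : ℝ≥0∞) : Integrable (fun x => eexp (y * x)) P := by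
  have hm : Measurable fun x : ℝ≥0∞ => eexp (y * x) :=
    measurable_eexp.comp (measurable_id.const_mul y)
  refine Integrable.mono' (integrable_const 1) hm.aestronglyMeasurable ?_
  filter_upwards with x
  rw [Real.norm_eq_abs, abs_of_nonneg (eexp_nonneg _)]
  exact eexp_le_one _

omit [IsProbabilityMeasure P] in
lemma phi_nonneg (hφ : ∀ y, φ y = ∫ x, eexp (y * x) ∂P) (y : ℝ≥0∞) : 0 ≤ φ y := by
  rw [hφ]; exact integral_nonneg fun x => eexp_nonneg _

lemma phi_le_one (hφ : ∀ y, φ y = ∫ x, eexp (y * x) ∂P) (y : ℝ≥0∞) : φ y ≤ 1 := by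
  rw [hφ]
  calc ∫ x, eexp (y * x) ∂P ≤ ∫ _x, (1:ℝ) ∂P :=
        integral_mono (integrable_eexp_mul y) (integrable_const 1) fun x => eexp_le_one _
  _ = 1 := by simp

lemma measurable_phi (hφ : ∀ y, φ y = ∫ x, eexp (y * x) ∂P) : Measurable φ := by
  have hm : StronglyMeasurable fun p : ℝ≥0∞ × ℝ≥0∞ => eexp (p.1 * p.2) :=
    (measurable_eexp.comp (measurable_fst.mul measurable_snd)).stronglyMeasurable
  have h2 := hm.integral_prod_right' (ν := P)
  have heq : φ = fun y => ∫ x, eexp (y * x) ∂P := funext hφ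
  rw [heq]
  exact h2.measurable

omit [IsProbabilityMeasure P] in
lemma ae_ne_top (hPtop : P {∞} = 0) : ∀ᵐ x ∂P, x ≠ ∞ := by
  rw [ae_iff]
  convert hPtop using 2
  ext x; simp

lemma phi_continuousAt (hPtop : P {∞} = 0) (hφ : ∀ y, φ y = ∫ x, eexp (y * x) ∂P)
    {s0 : ℝ≥0∞} : ContinuousAt φ s0 := by
  have heq : φ = fun y => ∫ x, eexp (y * x) ∂P := funext hφ
  rw [heq]
  unfold ContinuousAt
  refine tendsto_integral_filter_of_dominated_convergence (fun _ => (1:ℝ)) ?_ ?_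
    (integrable_const 1) ?_
  · filter_upwards with s
    exact (measurable_eexp.comp (measurable_id.const_mul s)).aestronglyMeasurable
  · filter_upwards with s
    filter_upwards with x
    rw [Real.norm_eq_abs, abs_of_nonneg (eexp_nonneg _)]
    exact eexp_le_one _
  · filter_upwards [ae_ne_top hPtop] with x hx
    have hmul : Tendsto (fun s : ℝ≥0∞ => s * x) (nhds s0) (nhds (s0 * x)) :=
      ENNReal.Tendsto.mul_const tendsto_id (Or.inr hx)
    exact (continuous_eexp.continuousAt).tendsto.comp hmul

end phi

/-! ### The function `D1` -/

lemma real_key {a b ξ : ℝ} (ha : 0 < a) (hab : a ≤ b) (hξ : 0 ≤ ξ) :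
    (1 - Real.exp (-(b * ξ))) / b ≤ (1 - Real.exp (-(a * ξ))) / a := by
  have hb : 0 < b := lt_of_lt_of_le ha hab
  rw [div_le_div_iff₀ hb ha]
  have hl0 : (0:ℝ) ≤ a / b := by positivity
  have hl1 : a / b ≤ 1 := (div_le_one hb).2 hab
  have hconv := convexOn_exp.2 (Set.mem_univ (-(b * ξ))) (Set.mem_univ 0) hl0
    (by linarith : (0:ℝ) ≤ 1 - a / b) (by ring)
  simp only [smul_eq_mul, mul_zero, add_zero, Real.exp_zero, mul_one] at hconv
  have harg : a / b * -(b * ξ) = -(a * ξ) := by field_simp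
  rw [harg] at hconv
  have hmul := mul_le_mul_of_nonneg_left hconv hb.le
  have hcanc : b * (a / b) = a := by field_simp
  nlinarith [Real.exp_pos (-(b * ξ))]

set_option maxHeartbeats 1000000 in
lemma pointwise_key {s s' x : ℝ≥0∞} (hs : s ≠ 0) (hss' : s ≤ s') (hx : x ≠ ∞) :
    ENNReal.ofReal (1 - eexp (s' * x)) / s' ≤ ENNReal.ofReal (1 - eexp (s * x)) / s := by
  by_cases hs' : s' = ∞
  · rw [hs', ENNReal.div_top]; exact zero_le
  have hstop : s ≠ ∞ := fun h => hs' (top_le_iff.1 (h ▸ hss'))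
  have hsx : s * x ≠ ∞ := ENNReal.mul_ne_top hstop hx
  have hs'x : s' * x ≠ ∞ := ENNReal.mul_ne_top hs' hx
  have hspos : 0 < s.toReal := ENNReal.toReal_pos hs hstop
  have hs'pos : 0 < s'.toReal := lt_of_lt_of_le hspos (ENNReal.toReal_mono hs' hss')
  have key := ENNReal.ofReal_le_ofReal
    (real_key hspos (ENNReal.toReal_mono hs' hss') (ENNReal.toReal_nonneg (a := x)))
  rw [ENNReal.ofReal_div_of_pos hspos, ENNReal.ofReal_div_of_pos hs'pos] at key
  rw [ENNReal.ofReal_toReal hs', ENNReal.ofReal_toReal hstop] at key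
  convert key using 3
  · rw [eexp_ne_top hs'x, ENNReal.toReal_mul]
  · rw [eexp_ne_top hsx, ENNReal.toReal_mul]

section D1
variable {P : Measure ℝ≥0∞} [IsProbabilityMeasure P] {φ : ℝ≥0∞ → ℝ} {D1 : ℝ≥0∞ → ℝ≥0∞}

lemma ofReal_one_sub_phi (hφ : ∀ y, φ y = ∫ x, eexp (y * x) ∂P) (u : ℝ≥0∞) :
    ENNReal.ofReal (1 - φ u) = ∫⁻ x, ENNReal.ofReal (1 - eexp (u * x)) ∂P := by
  have hint : Integrable (fun x => 1 - eexp (u * x)) P :=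
    (integrable_const 1).sub (integrable_eexp_mul u)
  have h1 : (1 : ℝ) - φ u = ∫ x, (1 - eexp (u * x)) ∂P := by
    rw [integral_sub (integrable_const 1) (integrable_eexp_mul u), hφ u]; simp
  rw [h1]
  exact ofReal_integral_eq_lintegral_ofReal hint
    (ae_of_all _ fun x => by
      simpa using (by linarith [eexp_le_one (u * x)] : (0:ℝ) ≤ 1 - eexp (u * x)))

lemma D1_antitone (hPtop : P {∞} = 0) (hφ : ∀ y, φ y = ∫ x, eexp (y * x) ∂P)
    (hD1 : ∀ s : ℝ≥0∞, s ≠ 0 → D1 s = ENNReal.ofReal (1 - φ s) / s)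
    {s s' : ℝ≥0∞} (hs : s ≠ 0) (hss' : s ≤ s') : D1 s' ≤ D1 s := by
  have hs'0 : s' ≠ 0 := fun h => hs (le_antisymm (h ▸ hss') zero_le)
  rw [hD1 s hs, hD1 s' hs'0, ofReal_one_sub_phi hφ, ofReal_one_sub_phi hφ,
    div_eq_mul_inv, div_eq_mul_inv,
    ← lintegral_mul_const' _ _ (ENNReal.inv_ne_top.2 hs'0),
    ← lintegral_mul_const' _ _ (ENNReal.inv_ne_top.2 hs)]
  refine lintegral_mono_ae ?_
  filter_upwards [ae_ne_top hPtop] with x hx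
  rw [← div_eq_mul_inv, ← div_eq_mul_inv]
  exact pointwise_key hs hss' hx

lemma D1_mono (hPtop : P {∞} = 0) (hφ : ∀ y, φ y = ∫ x, eexp (y * x) ∂P)
    (hD1 : ∀ s : ℝ≥0∞, s ≠ 0 → D1 s = ENNReal.ofReal (1 - φ s) / s)
    (hD10 : Tendsto D1 (nhdsWithin 0 (Set.Ioi 0)) (nhds (D1 0)))
    {s s' : ℝ≥0∞} (hss' : s ≤ s') : D1 s' ≤ D1 s := by
  rcases eq_or_ne s 0 with rfl | hs
  · rcases eq_or_ne s' 0 with rfl | hs'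
    · exact le_rfl
    · refine ge_of_tendsto hD10 ?_
      have hmem : Set.Iic s' ∩ Set.Ioi 0 ∈ nhdsWithin (0:ℝ≥0∞) (Set.Ioi 0) := by
        refine Filter.inter_mem ?_ self_mem_nhdsWithin
        refine mem_nhdsWithin_of_mem_nhds ?_
        exact Filter.mem_of_superset (IsOpen.mem_nhds isOpen_Iio (pos_iff_ne_zero.2 hs'))
          Set.Iio_subset_Iic_self
      filter_upwards [hmem] with u hu
      exact D1_antitone hPtop hφ hD1 (pos_iff_ne_zero.1 hu.2) hu.1
  · exact D1_antitone hPtop hφ hD1 hs hss'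

lemma term_key (hPtop : P {∞} = 0) (hφ : ∀ y, φ y = ∫ x, eexp (y * x) ∂P)
    (hD1 : ∀ s : ℝ≥0∞, s ≠ 0 → D1 s = ENNReal.ofReal (1 - φ s) / s)
    (hD10 : Tendsto D1 (nhdsWithin 0 (Set.Ioi 0)) (nhds (D1 0)))
    {s M : ℝ≥0∞} (hsM : s ≤ M) : s * D1 M ≤ ENNReal.ofReal (1 - φ s) := by
  rcases eq_or_ne s 0 with rfl | hs
  · simp
  rcases eq_or_ne s ∞ with rfl | hstop
  · have hM : M = ∞ := top_le_iff.1 hsM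
    rw [hM, hD1 ∞ (by simp), ENNReal.div_top, mul_zero]
    exact zero_le
  calc s * D1 M ≤ s * D1 s := mul_le_mul_right (D1_mono hPtop hφ hD1 hD10 hsM) s
  _ = ENNReal.ofReal (1 - φ s) := by
      rw [hD1 s hs, mul_comm, ENNReal.div_mul_cancel hs hstop]

lemma D1_continuousAt_pos (hPtop : P {∞} = 0) (hφ : ∀ y, φ y = ∫ x, eexp (y * x) ∂P)
    (hD1 : ∀ s : ℝ≥0∞, s ≠ 0 → D1 s = ENNReal.ofReal (1 - φ s) / s)
    {s0 : ℝ≥0∞} (h0 : s0 ≠ 0) : ContinuousAt D1 s0 := by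
  have hev : D1 =ᶠ[nhds s0] fun s => ENNReal.ofReal (1 - φ s) / s := by
    have hmem : {s : ℝ≥0∞ | s ≠ 0} ∈ nhds s0 := IsOpen.mem_nhds isOpen_ne h0
    filter_upwards [hmem] with s hs using hD1 s hs
  rw [continuousAt_congr hev]
  refine ENNReal.Tendsto.div ?_ (Or.inr h0) tendsto_id (Or.inr ENNReal.ofReal_ne_top)
  exact (ENNReal.continuous_ofReal.continuousAt).comp
    ((continuous_const.sub continuous_id).continuousAt.comp (phi_continuousAt hPtop hφ))

omit [IsProbabilityMeasure P] in
lemma D1_continuousAt_zero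
    (hD10 : Tendsto D1 (nhdsWithin 0 (Set.Ioi 0)) (nhds (D1 0))) : ContinuousAt D1 0 := by
  have huniv : ({(0:ℝ≥0∞)} : Set ℝ≥0∞) ∪ Set.Ioi 0 = Set.univ := by
    ext x; simp [pos_iff_ne_zero, or_comm, eq_comm, em]
  have h := nhdsWithin_union (0:ℝ≥0∞) {0} (Set.Ioi 0)
  rw [huniv, nhdsWithin_univ] at h
  unfold ContinuousAt
  rw [h, tendsto_sup]
  exact ⟨by rw [nhdsWithin_singleton]; exact tendsto_pure_nhds D1 0, hD10⟩

end D1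

/-! ### Further auxiliary lemmas -/

lemma measurable_branchL {Ω : Type*} [MeasurableSpace Ω] :
    ∀ (v : UHTree) (T : UHTree → ℕ → Ω → ℝ≥0∞), (∀ u i, Measurable (T u i)) →
      Measurable (branchL T v)
  | [], T, hT => by simp [branchL]
  | i :: v, T, hT => by
      show Measurable fun ω => T [] i ω * branchL (fun u j => T (i :: u) j) v ω
      exact (hT [] i).mul (measurable_branchL v _ (fun u j => hT (i :: u) j))

lemma limsup_geexp_le (e : ℕ → ℝ≥0∞) :
    limsup (fun n => ENNReal.ofReal (eexp (e n))) atTop ≤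
      ENNReal.ofReal (eexp (liminf e atTop)) := by
  set m : ℕ → ℝ≥0∞ := fun n => ⨅ k, ⨅ (_ : n ≤ k), e k with hm
  have hmono : Monotone m := fun a b hab => le_iInf₂ fun k hk => iInf₂_le k (le_trans hab hk)
  have hlim : Tendsto m atTop (nhds (liminf e atTop)) := by
    rw [liminf_eq_iSup_iInf_of_nat]
    exact tendsto_atTop_iSup hmono
  have hcont : Continuous fun y => ENNReal.ofReal (eexp y) :=
    ENNReal.continuous_ofReal.comp continuous_eexp
  have htend : Tendsto (fun n => ENNReal.ofReal (eexp (m n))) atTop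
      (nhds (ENNReal.ofReal (eexp (liminf e atTop)))) := (hcont.continuousAt).tendsto.comp hlim
  calc limsup (fun n => ENNReal.ofReal (eexp (e n))) atTop
      ≤ limsup (fun n => ENNReal.ofReal (eexp (m n))) atTop := by
        refine limsup_le_limsup (Filter.Eventually.of_forall fun n => ?_)
        exact ENNReal.ofReal_le_ofReal (eexp_antitone (iInf₂_le n le_rfl))
  _ = ENNReal.ofReal (eexp (liminf e atTop)) := htend.limsup_eq

/-! ### Main theorem -/

theorem subharmonic_laplace_bound
    {Ω : Type*} [MeasurableSpace Ω] (μ : Measure Ω) [IsProbabilityMeasure μ]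
    (C : UHTree → Ω → ℝ≥0∞) (T : UHTree → ℕ → Ω → ℝ≥0∞)
    (hmeas : ∀ v, Measurable (pairRV C T v))
    (hindep : iIndepFun (pairRV C T) μ)
    (hident : ∀ v, IdentDistrib (pairRV C T v) (pairRV C T (.nil)) μ μ)
    (P : Measure ℝ≥0∞) [IsProbabilityMeasure P] (hPtop : P {∞} = 0)
    (φ : ℝ≥0∞ → ℝ) (hφ : ∀ y, φ y = ∫ x, eexp (y * x) ∂P)
    (hsub : ∀ (t : ℝ≥0) (n : ℕ),
      φ t ≤ ∫ ω, ∏' v : {v : UHTree // v.length = n}, φ (branchL T v ω * t) ∂μ)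
    -- a.s. convergence of the maximal weight to a finite limit
    (Linf : Ω → ℝ≥0∞)
    (hLinf : ∀ᵐ ω ∂μ,
      Tendsto (fun n => Lstar T n ω) atTop (nhds (Linf ω)) ∧ Linf ω < ∞)
    -- `D1(s) = (1 - φ(s))/s` for `s > 0`, extended by its limit at `0`
    (D1 : ℝ≥0∞ → ℝ≥0∞)
    (hD1 : ∀ s : ℝ≥0∞, s ≠ 0 → D1 s = ENNReal.ofReal (1 - φ s) / s)
    (hD10 : Tendsto D1 (nhdsWithin 0 (Set.Ioi 0)) (nhds (D1 0))) :
    ∀ t : ℝ≥0, 0 < t →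
      φ t ≤ ∫ ω, eexp ((t : ℝ≥0∞) * D1 (Linf ω * t) * Wone T ω) ∂μ := by
  intro t ht
  classical
  -- measurability preliminaries
  have hTm : ∀ u i, Measurable fun ω => T u i ω := fun u i =>
    (measurable_pi_apply i).comp (measurable_snd.comp (hmeas u))
  have hLm : ∀ v : UHTree, Measurable (branchL T v) := fun v => measurable_branchL v T hTm
  have hLstarm : ∀ n, Measurable (Lstar T n) := fun n =>
    Measurable.iSup fun v : {v : UHTree // v.length = n} => hLm v
  set S : ℕ → Ω → ℝ≥0∞ := fun n ω => ∑' v : {v : UHTree // v.length = n}, branchL T v ω with hS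
  have hSm : ∀ n, Measurable (S n) := fun n =>
    Measurable.ennreal_tsum fun v : {v : UHTree // v.length = n} => hLm v
  have hφm : Measurable φ := measurable_phi hφ
  have hD1m : Measurable D1 := by
    have hfun : D1 = fun s => if s = 0 then D1 0 else ENNReal.ofReal (1 - φ s) / s := by
      funext s
      split
      · next h => rw [h]
      · next h => exact hD1 s h
    rw [hfun]
    exact Measurable.ite (measurableSet_eq)
      measurable_const ((ENNReal.measurable_ofReal.comp (measurable_const.sub hφm)).div
        measurable_id)
  set g : ℕ → Ω → ℝ := fun n ω => eexp ((t:ℝ≥0∞) * D1 (Lstar T n ω * t) * S n ω) with hg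
  have hgm : ∀ n, Measurable (g n) := fun n =>
    measurable_eexp.comp
      ((measurable_const.mul (hD1m.comp ((hLstarm n).mul measurable_const))).mul (hSm n))
  have hgint : ∀ n, Integrable (g n) μ := fun n => by
    refine Integrable.mono' (integrable_const 1) (hgm n).aestronglyMeasurable ?_
    filter_upwards with ω
    rw [Real.norm_eq_abs, abs_of_nonneg (eexp_nonneg _)]
    exact eexp_le_one _
  -- Step 1 : `φ t ≤ ∫ g n` for every `n`
  have hB : ∀ n, φ t ≤ ∫ ω, g n ω ∂μ := by
    intro n
    refine (hsub t n).trans (integral_mono_of_nonneg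
      (Filter.Eventually.of_forall fun ω => ?_) (hgint n)
      (Filter.Eventually.of_forall fun ω => ?_))
    · exact tprod_nonneg' _ (fun v => phi_nonneg hφ _) (fun v => phi_le_one hφ _)
    · calc (∏' v : {v : UHTree // v.length = n}, φ (branchL T v ω * t))
          ≤ eexp (∑' v : {v : UHTree // v.length = n},
              ENNReal.ofReal (1 - φ (branchL T v ω * t))) :=
            tprod_le_eexp _ (fun v => phi_nonneg hφ _) (fun v => phi_le_one hφ _)
      _ ≤ g n ω := by
            refine eexp_antitone ?_
            have h1 : ∀ v : {v : UHTree // v.length = n},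
                branchL T v ω * (t:ℝ≥0∞) * D1 (Lstar T n ω * t) ≤
                  ENNReal.ofReal (1 - φ (branchL T v ω * t)) := fun v =>
              term_key hPtop hφ hD1 hD10
                (mul_le_mul_left (le_iSup (fun v : {v : UHTree // v.length = n} =>
                  branchL T v ω) v) _)
            calc (t:ℝ≥0∞) * D1 (Lstar T n ω * t) * S n ω
                = ∑' v : {v : UHTree // v.length = n},
                    branchL T v ω * (t:ℝ≥0∞) * D1 (Lstar T n ω * t) := by
                  rw [mul_comm ((t:ℝ≥0∞) * D1 (Lstar T n ω * t)) (S n ω), hS,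
                    ← ENNReal.tsum_mul_right]
                  exact tsum_congr fun v => (mul_assoc _ _ _).symm
            _ ≤ _ := Summable.tsum_le_tsum h1 ENNReal.summable ENNReal.summable
  -- integrability of the limiting integrand
  set Linf' : Ω → ℝ≥0∞ := fun ω => limsup (fun n => Lstar T n ω) atTop with hLinf'
  have hLinfm' : Measurable Linf' := Measurable.limsup hLstarm
  have hae : ∀ᵐ ω ∂μ, Linf ω = Linf' ω := by
    filter_upwards [hLinf] with ω hω using hω.1.limsup_eq.symm
  have hWm : Measurable (Wone T) := Measurable.liminf hSm
  set h' : Ω → ℝ := fun ω => eexp ((t:ℝ≥0∞) * D1 (Linf' ω * t) * Wone T ω) with hh'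
  have hh'm : Measurable h' := measurable_eexp.comp
    ((measurable_const.mul (hD1m.comp (hLinfm'.mul measurable_const))).mul hWm)
  have hhae : h' =ᵐ[μ] (fun ω => eexp ((t:ℝ≥0∞) * D1 (Linf ω * t) * Wone T ω)) := by
    filter_upwards [hae] with ω hω
    rw [hh']
    simp only []
    rw [← hω]
  have hint : Integrable (fun ω => eexp ((t:ℝ≥0∞) * D1 (Linf ω * t) * Wone T ω)) μ := by
    refine (Integrable.mono' (integrable_const 1) hh'm.aestronglyMeasurable ?_).congr hhae
    filter_upwards with ω
    rw [Real.norm_eq_abs, abs_of_nonneg (eexp_nonneg _)]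
    exact eexp_le_one _
  -- Step 2 : pass to the limit via Fatou's lemma (limsup version)
  have hkey : ENNReal.ofReal (φ t) ≤
      ∫⁻ ω, ENNReal.ofReal (eexp ((t:ℝ≥0∞) * D1 (Linf ω * t) * Wone T ω)) ∂μ := by
    have hG : ∀ n, ENNReal.ofReal (φ t) ≤ ∫⁻ ω, ENNReal.ofReal (g n ω) ∂μ := by
      intro n
      rw [← ofReal_integral_eq_lintegral_ofReal (hgint n)
        (Filter.Eventually.of_forall fun ω => eexp_nonneg _)]
      exact ENNReal.ofReal_le_ofReal (hB n)
    calc ENNReal.ofReal (φ t)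
        = limsup (fun _ : ℕ => ENNReal.ofReal (φ t)) atTop := (limsup_const _).symm
      _ ≤ limsup (fun n => ∫⁻ ω, ENNReal.ofReal (g n ω) ∂μ) atTop :=
          limsup_le_limsup (Filter.Eventually.of_forall hG)
      _ ≤ ∫⁻ ω, limsup (fun n => ENNReal.ofReal (g n ω)) atTop ∂μ :=
          limsup_lintegral_le (fun _ => 1)
            (fun n => ENNReal.measurable_ofReal.comp (hgm n))
            (fun n => Filter.Eventually.of_forall fun ω =>
              ENNReal.ofReal_le_one.2 (eexp_le_one _)) (by simp)
      _ ≤ _ := by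
          refine lintegral_mono_ae ?_
          filter_upwards [hLinf] with ω hω
          obtain ⟨hconv, hfin⟩ := hω
          have hu : Tendsto (fun n => Lstar T n ω * (t:ℝ≥0∞)) atTop (nhds (Linf ω * t)) :=
            ENNReal.Tendsto.mul_const hconv (Or.inr ENNReal.coe_ne_top)
          have hcont : ContinuousAt D1 (Linf ω * t) := by
            rcases eq_or_ne (Linf ω * (t:ℝ≥0∞)) 0 with hz | hz
            · rw [hz]; exact D1_continuousAt_zero hD10
            · exact D1_continuousAt_pos hPtop hφ hD1 hz
          have hd : Tendsto (fun n => D1 (Lstar T n ω * t)) atTop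
              (nhds (D1 (Linf ω * t))) := hcont.tendsto.comp hu
          have hc : Tendsto (fun n => (t:ℝ≥0∞) * D1 (Lstar T n ω * t)) atTop
              (nhds ((t:ℝ≥0∞) * D1 (Linf ω * t))) :=
            ENNReal.Tendsto.const_mul hd (Or.inr ENNReal.coe_ne_top)
          have hliminf : (t:ℝ≥0∞) * D1 (Linf ω * t) * Wone T ω ≤
              liminf (fun n => (t:ℝ≥0∞) * D1 (Lstar T n ω * t) * S n ω) atTop := by
            have hmm := ENNReal.le_liminf_mul (f := atTop)
              (u := fun n => (t:ℝ≥0∞) * D1 (Lstar T n ω * t)) (v := fun n => S n ω)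
            rw [hc.liminf_eq] at hmm
            exact hmm
          calc limsup (fun n => ENNReal.ofReal (g n ω)) atTop
              ≤ ENNReal.ofReal (eexp (liminf
                  (fun n => (t:ℝ≥0∞) * D1 (Lstar T n ω * t) * S n ω) atTop)) :=
                limsup_geexp_le _
            _ ≤ ENNReal.ofReal (eexp ((t:ℝ≥0∞) * D1 (Linf ω * t) * Wone T ω)) :=
                ENNReal.ofReal_le_ofReal (eexp_antitone hliminf)
  rw [← ofReal_integral_eq_lintegral_ofReal hint
    (Filter.Eventually.of_forall fun ω => eexp_nonneg _)] at hkey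
  exact (ENNReal.ofReal_le_ofReal_iff (integral_nonneg fun ω => eexp_nonneg _)).1 hkey
end
end

section
/- Let m(θ) := E Σ_{i≥1} T_i^θ 1{T_i > 0} and suppose inf_{θ∈[0,1]} m(θ) > 1, where m(θ) may be +∞. For a ∈ ℕ define the truncated sequence with entries min(a, T_i) for i ≤ a and 0 for i > a, and let m_a denote the corresponding function m_a(θ) = E Σ_{i=1}^{a} min(a,T_i)^θ 1{min(a,T_i)>0}. Then there exists a ∈ ℕ such that inf_{θ∈[0,1]} m_a(θ) > 1. -/
open MeasureTheory NNReal ENNReal Filter Topology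

noncomputable section

set_option linter.unusedSectionVars false

namespace TruncAux

variable {Ω : Type*} [MeasurableSpace Ω] (T : ℕ → Ω → ℝ≥0∞)

def g (θ : ℝ) (x : ℝ≥0∞) : ℝ≥0∞ := if 0 < x then x ^ θ else 0

lemma g_mono {θ : ℝ} (hθ : 0 ≤ θ) : Monotone (g θ) := by
  intro x y hxy
  unfold g
  by_cases hx : 0 < x
  · rw [if_pos hx, if_pos (lt_of_lt_of_le hx hxy)]
    exact ENNReal.rpow_le_rpow hxy hθ
  · simp [hx]

lemma g_le_max {θ : ℝ} (hθ0 : 0 ≤ θ) (hθ1 : θ ≤ 1) (x : ℝ≥0∞) :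
    g θ x ≤ max x 1 := by
  unfold g
  by_cases hx : 0 < x
  · rw [if_pos hx]
    rcases le_total x 1 with h | h
    · calc x ^ θ ≤ x ^ (0:ℝ) := ENNReal.rpow_le_rpow_of_exponent_ge h hθ0
      _ = 1 := by simp
      _ ≤ max x 1 := le_max_right _ _
    · calc x ^ θ ≤ x ^ (1:ℝ) := ENNReal.rpow_le_rpow_of_exponent_le h hθ1
      _ = x := by simp
      _ ≤ max x 1 := le_max_left _ _
  · simp [hx]

lemma g_measurable (θ : ℝ) : Measurable (g θ) := by
  unfold g
  exact Measurable.ite (measurableSet_lt measurable_const measurable_id)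
    (ENNReal.continuous_rpow_const.measurable) measurable_const

lemma iSup_g_min {θ : ℝ} (hθ : 0 ≤ θ) (x : ℝ≥0∞) :
    ⨆ a : ℕ, g θ (min (a : ℝ≥0∞) x) = g θ x := by
  have hmin : Monotone fun a : ℕ => min (a : ℝ≥0∞) x := fun a b hab =>
    min_le_min (by exact_mod_cast Nat.cast_le.mpr hab) le_rfl
  have hsup : ⨆ a : ℕ, min (a : ℝ≥0∞) x = x := by
    have : ⨆ a : ℕ, ((a : ℝ≥0∞) ⊓ x) = (⨆ a : ℕ, (a : ℝ≥0∞)) ⊓ x := (iSup_inf_eq _ _).symm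
    simpa [ENNReal.iSup_natCast] using this
  have htend : Tendsto (fun a : ℕ => min (a : ℝ≥0∞) x) atTop (𝓝 x) :=
    by have h := tendsto_atTop_iSup hmin; rwa [hsup] at h
  by_cases hx : 0 < x
  · have hg : Tendsto (fun a : ℕ => g θ (min (a : ℝ≥0∞) x)) atTop (𝓝 (x ^ θ)) := by
      have hrt : Tendsto (fun a : ℕ => (min (a : ℝ≥0∞) x) ^ θ) atTop (𝓝 (x ^ θ)) :=
        (ENNReal.continuous_rpow_const.tendsto x).comp htend
      refine hrt.congr' ?_
      filter_upwards [eventually_ge_atTop 1] with a ha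
      have : 0 < min (a : ℝ≥0∞) x := by
        refine lt_min ?_ hx
        exact_mod_cast Nat.cast_pos.mpr ha
      simp [g, this]
    have hmono : Monotone fun a : ℕ => g θ (min (a : ℝ≥0∞) x) :=
      fun a b hab => g_mono hθ (hmin hab)
    rw [iSup_eq_of_tendsto hmono hg]
    simp [g, hx]
  · have hx0 : x = 0 := by simpa using hx
    simp [g, hx0]

def F (a : ℕ) (θ : ℝ) (ω : Ω) : ℝ≥0∞ :=
  ∑ i ∈ Finset.range a, g θ (min (a : ℝ≥0∞) (T i ω))

lemma min_mono_nat {a b : ℕ} (hab : a ≤ b) (x : ℝ≥0∞) :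
    min (a : ℝ≥0∞) x ≤ min (b : ℝ≥0∞) x :=
  min_le_min (by exact_mod_cast Nat.cast_le.mpr hab) le_rfl

lemma F_mono_a {θ : ℝ} (hθ : 0 ≤ θ) {a b : ℕ} (hab : a ≤ b) (ω : Ω) :
    F T a θ ω ≤ F T b θ ω := by
  unfold F
  calc ∑ i ∈ Finset.range a, g θ (min (a : ℝ≥0∞) (T i ω))
      ≤ ∑ i ∈ Finset.range a, g θ (min (b : ℝ≥0∞) (T i ω)) :=
        Finset.sum_le_sum fun i _ => g_mono hθ (min_mono_nat hab _)
    _ ≤ ∑ i ∈ Finset.range b, g θ (min (b : ℝ≥0∞) (T i ω)) :=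
        Finset.sum_le_sum_of_subset (Finset.range_subset_range.mpr hab)

lemma F_le_tsum {θ : ℝ} (hθ : 0 ≤ θ) (a : ℕ) (ω : Ω) :
    F T a θ ω ≤ ∑' i, g θ (T i ω) := by
  unfold F
  calc ∑ i ∈ Finset.range a, g θ (min (a : ℝ≥0∞) (T i ω))
      ≤ ∑ i ∈ Finset.range a, g θ (T i ω) :=
        Finset.sum_le_sum fun i _ => g_mono hθ (min_le_right _ _)
    _ ≤ ∑' i, g θ (T i ω) := ENNReal.sum_le_tsum _

lemma iSup_F {θ : ℝ} (hθ : 0 ≤ θ) (ω : Ω) :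
    ⨆ a : ℕ, F T a θ ω = ∑' i, g θ (T i ω) := by
  refine le_antisymm (iSup_le fun a => F_le_tsum T hθ a ω) ?_
  rw [ENNReal.tsum_eq_iSup_nat]
  refine iSup_le fun n => ?_
  have h1 : ∑ i ∈ Finset.range n, g θ (T i ω)
      = ∑ i ∈ Finset.range n, ⨆ a : ℕ, g θ (min (a : ℝ≥0∞) (T i ω)) := by
    refine Finset.sum_congr rfl fun i _ => (iSup_g_min hθ _).symm
  rw [h1, ENNReal.finsetSum_iSup_of_monotone
    (f := fun i (a : ℕ) => g θ (min (a : ℝ≥0∞) (T i ω)))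
    (fun i a b hab => g_mono hθ (min_mono_nat hab _))]
  refine iSup_le fun a => ?_
  have h2 : ∑ i ∈ Finset.range n, g θ (min (a : ℝ≥0∞) (T i ω)) ≤ F T (max n a) θ ω := by
    unfold F
    calc ∑ i ∈ Finset.range n, g θ (min (a : ℝ≥0∞) (T i ω))
        ≤ ∑ i ∈ Finset.range n, g θ (min ((max n a : ℕ) : ℝ≥0∞) (T i ω)) :=
          Finset.sum_le_sum fun i _ => g_mono hθ (min_mono_nat (le_max_right n a) _)
      _ ≤ ∑ i ∈ Finset.range (max n a), g θ (min ((max n a : ℕ) : ℝ≥0∞) (T i ω)) :=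
          Finset.sum_le_sum_of_subset (Finset.range_subset_range.mpr (le_max_left n a))
  exact h2.trans (le_iSup (fun a => F T a θ ω) (max n a))

lemma F_meas (hmeas : ∀ i, Measurable (T i)) (a : ℕ) (θ : ℝ) :
    Measurable (F T a θ) := by
  unfold F
  exact Finset.measurable_sum _ fun i _ =>
    (g_measurable θ).comp (measurable_const.min (hmeas i))

lemma F_bound {θ : ℝ} (hθ0 : 0 ≤ θ) (hθ1 : θ ≤ 1) (a : ℕ) (ω : Ω) :
    F T a θ ω ≤ (a : ℝ≥0∞) * max (a : ℝ≥0∞) 1 := by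
  unfold F
  have h : ∀ i ∈ Finset.range a, g θ (min (a : ℝ≥0∞) (T i ω)) ≤ max (a : ℝ≥0∞) 1 :=
    fun i _ => (g_le_max hθ0 hθ1 _).trans (max_le_max (min_le_left _ _) le_rfl)
  calc ∑ i ∈ Finset.range a, g θ (min (a : ℝ≥0∞) (T i ω))
      ≤ (Finset.range a).card • max (a : ℝ≥0∞) 1 := Finset.sum_le_card_nsmul _ _ _ h
    _ = (a : ℝ≥0∞) * max (a : ℝ≥0∞) 1 := by
        simp [nsmul_eq_mul]

lemma F_cont {u : ℕ → ℝ} {θ : ℝ} (hu : Tendsto u atTop (𝓝 θ)) (b : ℕ) (ω : Ω) :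
    Tendsto (fun k => F T b (u k) ω) atTop (𝓝 (F T b θ ω)) := by
  unfold F
  refine tendsto_finset_sum _ fun i _ => ?_
  set x := min (b : ℝ≥0∞) (T i ω) with hxdef
  by_cases hx : 0 < x
  · have hxne : x ≠ 0 := hx.ne'
    have hxtop : x ≠ ∞ := (lt_of_le_of_lt (min_le_left _ _) (ENNReal.natCast_lt_top b)).ne
    lift x to ℝ≥0 using hxtop with c hc
    have hcne : c ≠ 0 := by
      simpa using hxne
    have hrw : ∀ s : ℝ, g s ((c : ℝ≥0∞)) = ((c ^ s : ℝ≥0) : ℝ≥0∞) := by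
      intro s
      rw [g, if_pos hx, ENNReal.coe_rpow_of_ne_zero hcne]
    simp only [hrw]
    rw [ENNReal.tendsto_coe]
    have hc2 : ContinuousAt (fun p : ℝ≥0 × ℝ => p.1 ^ p.2) (c, θ) :=
      NNReal.continuousAt_rpow (Or.inl hcne)
    exact hc2.tendsto.comp (tendsto_const_nhds.prodMk_nhds hu)
  · simp only [g, if_neg hx]
    exact tendsto_const_nhds

end TruncAux

open TruncAux

theorem truncated_m_inf_gt_one
    {Ω : Type*} [MeasurableSpace Ω] (μ : Measure Ω) [IsProbabilityMeasure μ]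
    (T : ℕ → Ω → ℝ≥0∞) (hmeas : ∀ i, Measurable (T i))
    (m : ℝ → ℝ≥0∞)
    (hm : ∀ θ : ℝ, m θ = ∫⁻ ω, ∑' i : ℕ,
      (if 0 < T i ω then T i ω ^ θ else 0) ∂μ)
    (ma : ℕ → ℝ → ℝ≥0∞)
    (hma : ∀ (a : ℕ) (θ : ℝ), ma a θ = ∫⁻ ω, ∑ i ∈ Finset.range a,
      (if 0 < min (a : ℝ≥0∞) (T i ω) then min (a : ℝ≥0∞) (T i ω) ^ θ else 0) ∂μ)
    (hinf : 1 < ⨅ θ : Set.Icc (0 : ℝ) 1, m θ) :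
    ∃ a : ℕ, 1 < ⨅ θ : Set.Icc (0 : ℝ) 1, ma a θ := by
  classical
  have hma' : ∀ (a : ℕ) (θ : ℝ), ma a θ = ∫⁻ ω, F T a θ ω ∂μ := fun a θ => hma a θ
  have hm' : ∀ θ : ℝ, m θ = ∫⁻ ω, ∑' i, g θ (T i ω) ∂μ := fun θ => hm θ
  -- monotonicity of ma in a
  have ma_mono : ∀ {θ : ℝ}, 0 ≤ θ → ∀ {a b : ℕ}, a ≤ b → ma a θ ≤ ma b θ := by
    intro θ hθ a b hab
    rw [hma', hma']
    exact lintegral_mono fun ω => F_mono_a T hθ hab ω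
  -- sup over a equals m
  have ma_sup : ∀ {θ : ℝ}, 0 ≤ θ → ⨆ a : ℕ, ma a θ = m θ := by
    intro θ hθ
    simp_rw [hma' _ θ, hm' θ]
    rw [← lintegral_iSup (fun a => F_meas T hmeas a θ)
      (fun a b hab ω => F_mono_a T hθ hab ω)]
    exact lintegral_congr fun ω => iSup_F T hθ ω
  -- continuity of ma b along sequences
  have ma_cont : ∀ (b : ℕ) (u : ℕ → ℝ), (∀ k, u k ∈ Set.Icc (0:ℝ) 1) →
      ∀ {θ : ℝ}, Tendsto u atTop (𝓝 θ) →
      Tendsto (fun k => ma b (u k)) atTop (𝓝 (ma b θ)) := by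
    intro b u humem θ hu
    simp_rw [hma' b]
    refine tendsto_lintegral_of_dominated_convergence
      (fun _ => (b : ℝ≥0∞) * max (b : ℝ≥0∞) 1)
      (fun k => F_meas T hmeas b (u k))
      (fun k => Filter.Eventually.of_forall fun ω =>
        F_bound T (humem k).1 (humem k).2 b ω) ?_ ?_
    · rw [lintegral_const, measure_univ, mul_one]
      exact ENNReal.mul_ne_top (ENNReal.natCast_ne_top b)
        (by simp [ENNReal.natCast_ne_top b, max_eq_iff] : max (b:ℝ≥0∞) 1 ≠ ∞)
    · exact Filter.Eventually.of_forall fun ω => F_cont T hu b ω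
  by_contra hcon
  push_neg at hcon
  -- choose near-minimizers
  have hex : ∀ a : ℕ, ∃ θ : Set.Icc (0:ℝ) 1, ma a (θ : ℝ) < 1 + ((a : ℝ≥0∞) + 1)⁻¹ := by
    intro a
    have hpos : (0:ℝ≥0∞) < ((a : ℝ≥0∞) + 1)⁻¹ :=
      ENNReal.inv_pos.mpr (by simp [ENNReal.natCast_ne_top])
    have hlt : ⨅ θ : Set.Icc (0:ℝ) 1, ma a θ < 1 + ((a : ℝ≥0∞) + 1)⁻¹ :=
      lt_of_le_of_lt (hcon a) (ENNReal.lt_add_right one_ne_top hpos.ne')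
    exact iInf_lt_iff.mp hlt
  choose θs hθs using hex
  obtain ⟨θst, hθstmem, φ, hφ, hconv⟩ :=
    isCompact_Icc.tendsto_subseq (x := fun a => (θs a : ℝ)) (fun a => (θs a).2)
  -- 1 < m θst
  have hmst : 1 < m θst := lt_of_lt_of_le hinf (iInf_le (fun θ : Set.Icc (0:ℝ) 1 => m θ) ⟨θst, hθstmem⟩)
  rw [← ma_sup hθstmem.1] at hmst
  obtain ⟨b, hb⟩ := lt_iSup_iff.mp hmst
  obtain ⟨c, hc1, hcL⟩ := exists_between hb
  have hcne : c ≠ ∞ := ne_top_of_lt hcL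
  -- continuity along the subsequence
  have htd : Tendsto (fun k => ma b ((θs (φ k) : ℝ))) atTop (𝓝 (ma b θst)) :=
    ma_cont b (fun k => (θs (φ k) : ℝ)) (fun k => (θs (φ k)).2) hconv
  have hev1 : ∀ᶠ k in atTop, c < ma b ((θs (φ k) : ℝ)) := htd.eventually_const_lt hcL
  obtain ⟨n, hn⟩ := ENNReal.exists_inv_nat_lt
    (a := c - 1) (by simpa [tsub_eq_zero_iff_le] using hc1.not_ge)
  obtain ⟨k, hk1, hk2⟩ := (hev1.and (eventually_ge_atTop (max n b))).exists
  set j := φ k with hj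
  have hjk : max n b ≤ j := le_trans hk2 hφ.le_apply
  have hchain : c < c := by
    calc c < ma b ((θs j : ℝ)) := hk1
      _ ≤ ma j ((θs j : ℝ)) := ma_mono (θs j).2.1 (le_trans (le_max_right n b) hjk)
      _ < 1 + ((j : ℝ≥0∞) + 1)⁻¹ := hθs j
      _ ≤ 1 + ((n : ℝ≥0∞))⁻¹ := by
          gcongr
          calc (n : ℝ≥0∞) ≤ (j : ℝ≥0∞) := by
                exact_mod_cast le_trans (le_max_left n b) hjk
            _ ≤ (j : ℝ≥0∞) + 1 := le_self_add
      _ < 1 + (c - 1) := ENNReal.add_lt_add_left one_ne_top hn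
      _ = c := add_tsub_cancel_of_le hc1.le
  exact absurd hchain (lt_irrefl c)
end
end

section
/- Suppose m(β) := E Σ_{i≥1} T_i^β < 1 and E C^β < ∞ for some β ∈ (0,1]. Then E (W*)^β ≤ (E C^β) / (1 − m(β)) < ∞; in particular W* = Σ_{v∈V} L(v)C(v) < ∞ almost surely. -/
open MeasureTheory ProbabilityTheory ENNReal NNReal Filter

noncomputable section

/-- `W* = Σ_{v ∈ V} L(v) C(v)`, with values in `[0,∞]`. -/
def Wstar {Ω : Type*} (C : UHTree → Ω → ℝ≥0∞) (T : UHTree → ℕ → Ω → ℝ≥0∞) (ω : Ω) : ℝ≥0∞ :=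
  ∑' v : UHTree, branchL T v ω * C v ω

/-! ### Auxiliary lemmas -/

lemma myFinsetRpow {ι : Type*} (s : Finset ι) (f : ι → ℝ≥0∞) {p : ℝ} (hp : 0 < p) (hp1 : p ≤ 1) :
    (∑ i ∈ s, f i) ^ p ≤ ∑ i ∈ s, f i ^ p := by
  classical
  induction s using Finset.induction_on with
  | empty => simp [ENNReal.zero_rpow_of_pos hp]
  | insert j t hj ih =>
    rw [Finset.sum_insert hj, Finset.sum_insert hj]
    exact le_trans (ENNReal.rpow_add_le_add_rpow _ _ hp.le hp1) (by gcongr)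

lemma myTsumRpow {ι : Type*} (f : ι → ℝ≥0∞) {p : ℝ} (hp : 0 < p) (hp1 : p ≤ 1) :
    (∑' i, f i) ^ p ≤ ∑' i, f i ^ p := by
  rw [ENNReal.tsum_eq_iSup_sum]
  have mono : Monotone (fun x : ℝ≥0∞ => x ^ p) := fun a b h => ENNReal.rpow_le_rpow h hp.le
  rw [mono.map_iSup_of_continuousAt ENNReal.continuous_rpow_const.continuousAt
    (by simp [ENNReal.zero_rpow_of_pos hp])]
  exact iSup_le fun s => le_trans (myFinsetRpow s f hp hp1) (ENNReal.sum_le_tsum s)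

lemma myProdRpow {ι : Type*} (s : Finset ι) (f : ι → ℝ≥0∞) {p : ℝ} (hp : 0 ≤ p) :
    (∏ i ∈ s, f i) ^ p = ∏ i ∈ s, f i ^ p := by
  classical
  induction s using Finset.induction_on with
  | empty => simp
  | insert j t hj ih =>
    rw [Finset.prod_insert hj, Finset.prod_insert hj, ENNReal.mul_rpow_of_nonneg _ _ hp, ih]

lemma myLintegralProd {Ω E ι : Type*} [MeasurableSpace Ω] [MeasurableSpace E]
    {μ : Measure Ω} [IsProbabilityMeasure μ]
    (f : ι → Ω → E) (hf : ∀ i, Measurable (f i))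
    (hindep : iIndepFun f μ)
    (g : ι → E → ℝ≥0∞) (hg : ∀ i, Measurable (g i)) (s : Finset ι) :
    ∫⁻ ω, ∏ i ∈ s, g i (f i ω) ∂μ = ∏ i ∈ s, ∫⁻ ω, g i (f i ω) ∂μ := by
  classical
  induction s using Finset.induction_on with
  | empty => simp
  | insert j t hj ih =>
    simp only [Finset.prod_insert hj]
    have hX : Measurable fun ω => g j (f j ω) := (hg j).comp (hf j)
    have hY : Measurable fun ω => ∏ i ∈ t, g i (f i ω) :=
      Finset.measurable_prod _ fun i _ => (hg i).comp (hf i)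
    have hind : IndepFun (fun ω => g j (f j ω)) (fun ω => ∏ i ∈ t, g i (f i ω)) μ := by
      have h1 := hindep.indepFun_finset {j} t (by simp [Finset.disjoint_left, hj]) hf
      have h2 := h1.comp
        (φ := fun h : ({j} : Finset ι) → E => g j (h ⟨j, Finset.mem_singleton_self j⟩))
        (ψ := fun h : {x : ι // x ∈ t} → E => ∏ i ∈ t.attach, g i.1 (h i))
        ((hg j).comp (measurable_pi_apply _))
        (Finset.measurable_prod _ fun i _ => (hg i.1).comp (measurable_pi_apply _))
      have e1 : (fun h : ({j} : Finset ι) → E => g j (h ⟨j, Finset.mem_singleton_self j⟩)) ∘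
          (fun ω (i : ({j} : Finset ι)) => f i ω) = fun ω => g j (f j ω) := rfl
      have e2 : (fun h : {x : ι // x ∈ t} → E => ∏ i ∈ t.attach, g i.1 (h i)) ∘
          (fun ω (i : {x : ι // x ∈ t}) => f i.1 ω) = fun ω => ∏ i ∈ t, g i (f i ω) := by
        funext ω
        exact Finset.prod_attach t fun i => g i (f i ω)
      rwa [e1, e2] at h2
    have hmul := lintegral_mul_eq_lintegral_mul_lintegral_of_indepFun hX hY hind
    simp only [Pi.mul_apply] at hmul
    rw [← ih, ← hmul]

lemma branchL_eq {Ω : Type*} (T : UHTree → ℕ → Ω → ℝ≥0∞) (v : UHTree) (ω : Ω) :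
    branchL T v ω = ∏ k ∈ Finset.range v.length, T (v.take k) (v.getD k 0) ω := by
  induction v generalizing T with
  | nil => simp [branchL]
  | cons i v ih =>
    rw [branchL, ih, List.length_cons, Finset.prod_range_succ']
    simp only [List.take_succ_cons, List.getD_cons_succ, List.take_zero, List.getD_cons_zero]
    rw [mul_comm]

lemma prod_range_getD (v : List ℕ) (h : ℕ → ℝ≥0∞) :
    ∏ k ∈ Finset.range v.length, h (v.getD k 0) = (v.map h).prod := by
  induction v with
  | nil => simp
  | cons i v ih =>
    rw [List.length_cons, Finset.prod_range_succ']
    simp only [List.getD_cons_succ, List.getD_cons_zero, List.map_cons, List.prod_cons, ih]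
    rw [mul_comm]

lemma tsum_list_prod (m : ℕ → ℝ≥0∞) :
    ∑' v : List ℕ, (v.map m).prod = ∑' n : ℕ, (∑' i : ℕ, m i) ^ n := by
  have key : ∀ n : ℕ, ∑' w : Fin n → ℕ, ∏ i, m (w i) = (∑' i : ℕ, m i) ^ n := by
    intro n
    induction n with
    | zero =>
      rw [pow_zero]
      rw [tsum_eq_single (default : Fin 0 → ℕ)
        (by intro b hb; exact absurd (Subsingleton.elim b default) hb)]
      simp
    | succ n ih =>
      rw [← (Fin.consEquiv (fun _ : Fin (n+1) => ℕ)).tsum_eq]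
      have : ∀ p : ℕ × (Fin n → ℕ),
          (∏ i, m ((Fin.consEquiv (fun _ : Fin (n+1) => ℕ) p) i)) = m p.1 * ∏ i, m (p.2 i) := by
        intro p
        rw [Fin.prod_univ_succ]
        simp [Fin.consEquiv, Fin.cons_succ]
      simp only [this]
      rw [ENNReal.tsum_prod' (f := fun p : ℕ × (Fin n → ℕ) => m p.1 * ∏ i, m (p.2 i))]
      simp only [ENNReal.tsum_mul_left]
      rw [ih, ENNReal.tsum_mul_right, pow_succ, mul_comm]
  rw [← (List.equivSigmaTuple (α := ℕ)).symm.tsum_eq]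
  simp only [List.equivSigmaTuple, Equiv.coe_fn_symm_mk]
  rw [ENNReal.tsum_sigma' (f := fun c : Σ n : ℕ, Fin n → ℕ => ((List.ofFn c.2).map m).prod)]
  congr 1
  funext n
  rw [← key n]
  congr 1
  funext w
  simp [List.map_ofFn, List.prod_ofFn]

theorem moment_bound_Wstar
    {Ω : Type*} [MeasurableSpace Ω] (μ : Measure Ω) [IsProbabilityMeasure μ]
    (C : UHTree → Ω → ℝ≥0∞) (T : UHTree → ℕ → Ω → ℝ≥0∞)
    (hmeas : ∀ v, Measurable (pairRV C T v))
    (hindep : iIndepFun (pairRV C T) μ)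
    (hident : ∀ v, IdentDistrib (pairRV C T v) (pairRV C T (.nil)) μ μ)
    (β : ℝ) (hβ0 : 0 < β) (hβ1 : β ≤ 1)
    (hm : ∫⁻ ω, ∑' i : ℕ, T (.nil) i ω ^ β ∂μ < 1)
    (hC : ∫⁻ ω, C (.nil) ω ^ β ∂μ < ∞) :
    (∫⁻ ω, Wstar C T ω ^ β ∂μ
        ≤ (∫⁻ ω, C (.nil) ω ^ β ∂μ) / (1 - ∫⁻ ω, ∑' i : ℕ, T (.nil) i ω ^ β ∂μ))
    ∧ (∀ᵐ ω ∂μ, Wstar C T ω < ∞) := by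
  classical
  have hT : ∀ u i, Measurable (T u i) :=
    fun u i => (measurable_pi_apply i).comp (hmeas u).snd
  have hCm : ∀ u, Measurable (C u) := fun u => (hmeas u).fst
  have hLm : ∀ v, Measurable (branchL T v) := by
    intro v
    have h : branchL T v = fun ω => ∏ k ∈ Finset.range v.length, T (v.take k) (v.getD k 0) ω :=
      funext (branchL_eq T v)
    rw [h]
    exact Finset.measurable_prod _ fun k _ => hT _ _
  set K := ∫⁻ ω, C (.nil) ω ^ β ∂μ with hK
  set M := ∫⁻ ω, ∑' i : ℕ, T (.nil) i ω ^ β ∂μ with hM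
  set mf : ℕ → ℝ≥0∞ := fun i => ∫⁻ ω, T (.nil) i ω ^ β ∂μ with hmf
  have hMsum : M = ∑' i, mf i :=
    lintegral_tsum fun i => ((hT (.nil) i).pow_const β).aemeasurable
  -- the per-vertex expectation
  have hvert : ∀ v : UHTree,
      ∫⁻ ω, branchL T v ω ^ β * C v ω ^ β ∂μ = (v.map mf).prod * K := by
    intro v
    set n := v.length with hn
    set g : UHTree → (ℝ≥0∞ × (ℕ → ℝ≥0∞)) → ℝ≥0∞ :=
      fun u p => if u.length = n then p.1 ^ β else (p.2 (v.getD u.length 0)) ^ β with hg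
    have hgmeas : ∀ u, Measurable (g u) := by
      intro u
      by_cases h : u.length = n
      · simp only [hg, h, if_true]
        exact measurable_fst.pow_const _
      · simp only [hg, h, if_false]
        exact ((measurable_pi_apply _).comp measurable_snd).pow_const _
    have hsplit : ∀ ω, branchL T v ω ^ β * C v ω ^ β
        = ∏ k ∈ Finset.range (n + 1), g (v.take k) (pairRV C T (v.take k) ω) := by
      intro ω
      rw [Finset.prod_range_succ]
      have h1 : g (v.take n) (pairRV C T (v.take n) ω) = C v ω ^ β := by
        simp [hg, hn, List.take_length, pairRV]
      have h2 : ∀ k ∈ Finset.range n, g (v.take k) (pairRV C T (v.take k) ω)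
          = T (v.take k) (v.getD k 0) ω ^ β := by
        intro k hk
        rw [Finset.mem_range] at hk
        have hlen : (v.take k).length = k := by
          rw [List.length_take]; omega
        simp [hg, hlen, hk.ne, pairRV]
      rw [Finset.prod_congr rfl h2, h1, branchL_eq, myProdRpow _ _ hβ0.le]
    have hinj : ∀ a ∈ Finset.range (n + 1), ∀ b ∈ Finset.range (n + 1),
        v.take a = v.take b → a = b := by
      intro a ha b hb hab
      rw [Finset.mem_range] at ha hb
      have : (v.take a).length = (v.take b).length := by rw [hab]
      rw [List.length_take, List.length_take] at this
      omega
    have himg : ∀ h : UHTree → ℝ≥0∞,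
        ∏ u ∈ (Finset.range (n + 1)).image (fun k => v.take k), h u
          = ∏ k ∈ Finset.range (n + 1), h (v.take k) :=
      fun h => Finset.prod_image hinj
    calc ∫⁻ ω, branchL T v ω ^ β * C v ω ^ β ∂μ
        = ∫⁻ ω, ∏ u ∈ (Finset.range (n + 1)).image (fun k => v.take k),
            g u (pairRV C T u ω) ∂μ := by
          refine lintegral_congr fun ω => ?_
          rw [hsplit ω, himg]
      _ = ∏ u ∈ (Finset.range (n + 1)).image (fun k => v.take k),
            ∫⁻ ω, g u (pairRV C T u ω) ∂μ :=
          myLintegralProd _ hmeas hindep g hgmeas _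
      _ = ∏ k ∈ Finset.range (n + 1), ∫⁻ ω, g (v.take k) (pairRV C T (v.take k) ω) ∂μ :=
          himg _
      _ = ∏ k ∈ Finset.range (n + 1), ∫⁻ ω, g (v.take k) (pairRV C T (.nil) ω) ∂μ := by
          refine Finset.prod_congr rfl fun k _ => ?_
          exact ((hident (v.take k)).comp (hgmeas (v.take k))).lintegral_eq
      _ = (v.map mf).prod * K := by
          rw [Finset.prod_range_succ]
          have h1 : ∫⁻ ω, g (v.take n) (pairRV C T (.nil) ω) ∂μ = K := by
            refine lintegral_congr fun ω => ?_
            simp [hg, hn, List.take_length, pairRV]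
          have h2 : ∀ k ∈ Finset.range n, ∫⁻ ω, g (v.take k) (pairRV C T (.nil) ω) ∂μ
              = mf (v.getD k 0) := by
            intro k hk
            rw [Finset.mem_range] at hk
            have hlen : (v.take k).length = k := by
              rw [List.length_take]; omega
            refine lintegral_congr fun ω => ?_
            simp [hg, hlen, hk.ne, pairRV]
          rw [Finset.prod_congr rfl h2, h1, hn, prod_range_getD]
  -- main estimate
  have hmain : ∫⁻ ω, Wstar C T ω ^ β ∂μ ≤ K / (1 - M) := by
    calc ∫⁻ ω, Wstar C T ω ^ β ∂μ
        ≤ ∫⁻ ω, ∑' v : UHTree, (branchL T v ω * C v ω) ^ β ∂μ :=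
          lintegral_mono fun ω => myTsumRpow _ hβ0 hβ1
      _ = ∑' v : UHTree, ∫⁻ ω, (branchL T v ω * C v ω) ^ β ∂μ :=
          lintegral_tsum fun v => (((hLm v).mul (hCm v)).pow_const β).aemeasurable
      _ = ∑' v : UHTree, (v.map mf).prod * K := by
          refine tsum_congr fun v => ?_
          rw [← hvert v]
          refine lintegral_congr fun ω => ?_
          rw [ENNReal.mul_rpow_of_nonneg _ _ hβ0.le]
      _ = (∑' v : UHTree, (v.map mf).prod) * K := ENNReal.tsum_mul_right
      _ = (∑' n : ℕ, (∑' i : ℕ, mf i) ^ n) * K := by rw [tsum_list_prod]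
      _ = (1 - M)⁻¹ * K := by rw [← hMsum, ENNReal.tsum_geometric]
      _ = K / (1 - M) := by rw [div_eq_mul_inv, mul_comm]
  refine ⟨hmain, ?_⟩
  have hWmeas : Measurable (Wstar C T) :=
    Measurable.ennreal_tsum fun v => (hLm v).mul (hCm v)
  have hfin : ∫⁻ ω, Wstar C T ω ^ β ∂μ < ∞ :=
    lt_of_le_of_lt hmain (ENNReal.div_lt_top hC.ne (tsub_pos_of_lt hm).ne')
  have hae := ae_lt_top (hWmeas.pow_const β) hfin.ne
  filter_upwards [hae] with ω hω
  by_contra h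
  rw [not_lt, top_le_iff] at h
  rw [h, ENNReal.top_rpow_of_pos hβ0] at hω
  exact absurd hω (lt_irrefl _)
end
end

section
/- Suppose that almost surely Σ_{i≥1} 1{T_i > 0} ≤ 1 or, more generally, assume the distributional fixed-point equation X ≝ C + T_1 X_1 (a perpetuity equation) with P(T_1 = 1, C = 0) < 1 has the iterated form: for every n, X ≝ Σ_{k=0}^{n-1} Π_{k} C_k + Π_n X_n in distribution, where (C_k, T_{1,k}) are i.i.d. copies of (C,T_1), Π_k = T_{1,0}···T_{1,k-1}, and X_n is independent of the weights. Then any fixed point X stochastically dominates Σ_{k≥0} Π_k C_k, and a fixed point exists if and only if Σ_{k≥0} Π_k C_k < ∞ almost surely. -/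
open MeasureTheory ProbabilityTheory NNReal ENNReal

set_option maxRecDepth 4000

noncomputable section

/-- `P` is a fixed point of the perpetuity equation `X ≝ C + T₁ X₁` associated with
the law `κ` of the pair `(C, T₁)`: on some probability space there are a copy
`(C', T')` of `(C, T₁)` and a random variable `X'` with law `P` independent of
`(C', T')` such that `C' + T' X'` has law `P`. -/
def IsPerpetuityFixedPoint (κ : Measure (ℝ≥0∞ × ℝ≥0∞)) (P : Measure ℝ≥0∞) : Prop :=
  ∃ (Ω' : Type) (_ : MeasurableSpace Ω') (μ' : Measure Ω') (_ : IsProbabilityMeasure μ')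
    (CT : Ω' → ℝ≥0∞ × ℝ≥0∞) (X : Ω' → ℝ≥0∞),
      Measurable CT ∧ Measurable X ∧
      μ'.map CT = κ ∧ μ'.map X = P ∧
      IndepFun CT X μ' ∧
      μ'.map (fun ω' => (CT ω').1 + (CT ω').2 * X ω') = P

namespace PerpetuityProof

open Set Filter Topology


/-- The mixing map `(c, s, x) ↦ c + s * x`. -/
def phi : (ℝ≥0∞ × ℝ≥0∞) × ℝ≥0∞ → ℝ≥0∞ := fun p => p.1.1 + p.1.2 * p.2

lemma measurable_phi : Measurable phi :=
  (measurable_fst.fst).add (measurable_fst.snd.mul measurable_snd)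

/-- Comparison of probability measures on upper sets from survival-function domination. -/
lemma upper_meas_le {ν ν' : Measure ℝ≥0∞} [IsProbabilityMeasure ν] [IsProbabilityMeasure ν']
    (h : ∀ t, ν (Ioi t) ≤ ν' (Ioi t)) {U : Set ℝ≥0∞} (hU : IsUpperSet U) : ν U ≤ ν' U := by
  rcases U.eq_empty_or_nonempty with rfl | hne
  · simp
  by_cases hrU : sInf U ∈ U
  · have hUeq : U = Ici (sInf U) := by
      refine Subset.antisymm (fun x hx => sInf_le hx) (fun x hx => hU hx hrU)
    rw [hUeq]
    rcases eq_or_ne (sInf U) 0 with h0 | h0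
    · rw [h0, show Ici (0:ℝ≥0∞) = univ from Set.ext fun x => by simp]
      simp [measure_univ]
    · obtain ⟨u, hu_mono, hu_mem, hu_tend⟩ :=
        exists_seq_strictMono_tendsto' (pos_iff_ne_zero.mpr h0 : (0:ℝ≥0∞) < sInf U)
      have hsub : ∀ n, Ici (sInf U) ⊆ Ioi (u n) := fun n x hx =>
        lt_of_lt_of_le (hu_mem n).2 hx
      have hiInter : ⋂ n, Ioi (u n) = Ici (sInf U) := by
        ext x
        simp only [mem_iInter, mem_Ioi, mem_Ici]
        constructor
        · intro hx
          by_contra hxr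
          push_neg at hxr
          obtain ⟨n, hn⟩ := (hu_tend.eventually (eventually_gt_nhds hxr)).exists
          exact absurd (hx n) (not_lt.mpr hn.le)
        · intro hx n; exact lt_of_lt_of_le (hu_mem n).2 hx
      have htend : Tendsto (fun n => ν' (Ioi (u n))) atTop (𝓝 (ν' (Ici (sInf U)))) := by
        rw [← hiInter]
        exact tendsto_measure_iInter_atTop
          (fun n => measurableSet_Ioi.nullMeasurableSet)
          (fun a b hab => Ioi_subset_Ioi (hu_mono.monotone hab)) ⟨0, measure_ne_top _ _⟩
      exact ge_of_tendsto htend (Eventually.of_forall fun n =>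
        le_trans (measure_mono (hsub n)) (h (u n)))
  · have hUeq : U = Ioi (sInf U) := by
      refine Subset.antisymm (fun x hx => ?_) (fun x hx => ?_)
      · rcases lt_or_eq_of_le (sInf_le hx) with h' | h'
        · exact h'
        · exact absurd (h' ▸ hx) hrU
      · obtain ⟨y, hyU, hyx⟩ := sInf_lt_iff.mp (show sInf U < x from hx)
        exact hU hyx.le hyU
    rw [hUeq]; exact h _

lemma map_phi_apply (κ : Measure (ℝ≥0∞ × ℝ≥0∞)) (ν : Measure ℝ≥0∞) [SFinite ν] (t : ℝ≥0∞) :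
    ((κ.prod ν).map phi) (Ioi t) = ∫⁻ cs, ν {x | t < cs.1 + cs.2 * x} ∂κ := by
  rw [Measure.map_apply measurable_phi measurableSet_Ioi,
    Measure.prod_apply (measurable_phi measurableSet_Ioi)]
  rfl

lemma map_phi_mono (κ : Measure (ℝ≥0∞ × ℝ≥0∞)) {ν ν' : Measure ℝ≥0∞}
    [IsProbabilityMeasure ν] [IsProbabilityMeasure ν']
    (h : ∀ t, ν (Ioi t) ≤ ν' (Ioi t)) (t : ℝ≥0∞) :
    ((κ.prod ν).map phi) (Ioi t) ≤ ((κ.prod ν').map phi) (Ioi t) := by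
  rw [map_phi_apply, map_phi_apply]
  refine lintegral_mono fun cs => ?_
  have hU : IsUpperSet {x : ℝ≥0∞ | t < cs.1 + cs.2 * x} := fun x y hxy hx =>
    lt_of_lt_of_le hx (add_le_add_right (mul_le_mul_right hxy _) _)
  exact upper_meas_le h hU


variable {Ω : Type*} [MeasurableSpace Ω] (C T : ℕ → Ω → ℝ≥0∞)

/-- Partial sums of the perpetuity series started at index `m`. -/
def S (n m : ℕ) (ω : Ω) : ℝ≥0∞ :=
  ∑ k ∈ Finset.range n, (∏ j ∈ Finset.range k, T (m + j) ω) * C (m + k) ω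

/-- The perpetuity series started at index `m`. -/
def W (m : ℕ) (ω : Ω) : ℝ≥0∞ :=
  ∑' k : ℕ, (∏ j ∈ Finset.range k, T (m + j) ω) * C (m + k) ω

variable {C T}

lemma term_rec (m : ℕ) (ω : Ω) (k : ℕ) :
    (∏ j ∈ Finset.range (k+1), T (m + j) ω) * C (m + (k+1)) ω
      = T m ω * ((∏ j ∈ Finset.range k, T (m + 1 + j) ω) * C (m + 1 + k) ω) := by
  have hprod : (∏ j ∈ Finset.range k, T (m + (j+1)) ω)
      = ∏ j ∈ Finset.range k, T (m + 1 + j) ω :=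
    Finset.prod_congr rfl fun j _ => by rw [show m + (j+1) = m + 1 + j from by omega]
  rw [Finset.prod_range_succ', hprod, Nat.add_zero,
    show m + (k+1) = m + 1 + k from by omega]
  simp [mul_comm, mul_assoc, mul_left_comm]

lemma S_rec (n m : ℕ) (ω : Ω) : S C T (n+1) m ω = C m ω + T m ω * S C T n (m+1) ω := by
  rw [S, Finset.sum_range_succ']
  simp only [term_rec, Finset.prod_range_zero, one_mul, Nat.add_zero]
  rw [← Finset.mul_sum]
  exact (add_comm _ _).trans rfl

lemma W_rec (m : ℕ) (ω : Ω) : W C T m ω = C m ω + T m ω * W C T (m+1) ω := by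
  rw [W, tsum_eq_zero_add' ENNReal.summable]
  simp only [term_rec, Finset.prod_range_zero, one_mul, Nat.add_zero]
  rw [ENNReal.tsum_mul_left]
  rfl

lemma S_mono (m : ℕ) (ω : Ω) : Monotone fun n => S C T n m ω := fun a b hab =>
  Finset.sum_le_sum_of_subset (Finset.range_subset_range.mpr hab)

lemma W_eq_iSup (m : ℕ) (ω : Ω) : W C T m ω = ⨆ n, S C T n m ω :=
  ENNReal.tsum_eq_iSup_nat

section meas

variable (hmeas : ∀ k, Measurable fun ω => (C k ω, T k ω))
include hmeas

lemma measurable_C (k : ℕ) : Measurable (C k) := (measurable_fst.comp (hmeas k) : _)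

lemma measurable_T (k : ℕ) : Measurable (T k) := (measurable_snd.comp (hmeas k) : _)

lemma measurable_S (n m : ℕ) : Measurable (S C T n m) :=
  Finset.measurable_sum _ fun k _ =>
    (Finset.measurable_prod _ fun j _ => measurable_T hmeas _).mul (measurable_C hmeas _)

lemma measurable_W (m : ℕ) : Measurable (W C T m) :=
  Measurable.ennreal_tsum fun k =>
    (Finset.measurable_prod _ fun j _ => measurable_T hmeas _).mul (measurable_C hmeas _)

end meas

/-- σ-algebra generated by the pairs with index different from `m`. -/
def Mc (C T : ℕ → Ω → ℝ≥0∞) (m : ℕ) : MeasurableSpace Ω :=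
  ⨆ i ∈ ({m}ᶜ : Set ℕ), MeasurableSpace.comap (fun ω => (C i ω, T i ω)) inferInstance

lemma measurable_Mc_pair {m i : ℕ} (hi : i ≠ m) :
    Measurable[Mc C T m] fun ω => (C i ω, T i ω) := by
  refine Measurable.mono (measurable_iff_comap_le.mpr le_rfl) ?_ le_rfl
  exact le_biSup (fun i => MeasurableSpace.comap (fun ω => (C i ω, T i ω)) inferInstance)
    (show i ∈ ({m}ᶜ : Set ℕ) from hi)

lemma measurable_Mc_S (n m : ℕ) : Measurable[Mc C T m] (S C T n (m+1)) :=
  Finset.measurable_sum _ fun k _ =>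
    Measurable.mul
      (Finset.measurable_prod _ fun j _ =>
        measurable_snd.comp (measurable_Mc_pair (show m + 1 + j ≠ m by omega)))
      (measurable_fst.comp (measurable_Mc_pair (show m + 1 + k ≠ m by omega)))

lemma measurable_Mc_W (m : ℕ) : Measurable[Mc C T m] (W C T (m+1)) :=
  Measurable.ennreal_tsum fun k =>
    Measurable.mul
      (Finset.measurable_prod _ fun j _ =>
        measurable_snd.comp (measurable_Mc_pair (show m + 1 + j ≠ m by omega)))
      (measurable_fst.comp (measurable_Mc_pair (show m + 1 + k ≠ m by omega)))

lemma indepFun_of_Mc {μ : Measure Ω}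
    (hmeas : ∀ k, Measurable fun ω => (C k ω, T k ω))
    (hindep : iIndepFun (fun k ω => (C k ω, T k ω)) μ)
    {m : ℕ} {g : Ω → ℝ≥0∞} (hg : Measurable[Mc C T m] g) :
    IndepFun (fun ω => (C m ω, T m ω)) g μ := by
  have h := indep_biSup_compl (fun i => (hmeas i).comap_le)
    ((iIndepFun_iff_iIndep _ _ _).mp hindep) {m}
  have h1 : MeasurableSpace.comap (fun ω => (C m ω, T m ω)) inferInstance ≤
      ⨆ i ∈ ({m} : Set ℕ), MeasurableSpace.comap (fun ω => (C i ω, T i ω)) inferInstance :=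
    le_biSup (fun i => MeasurableSpace.comap (fun ω => (C i ω, T i ω)) inferInstance)
      (Set.mem_singleton m)
  exact indep_of_indep_of_le_right (indep_of_indep_of_le_left h h1) hg.comap_le

section law

variable {μ : Measure Ω} [IsProbabilityMeasure μ]
variable (hmeas : ∀ k, Measurable fun ω => (C k ω, T k ω))
  (hindep : iIndepFun (fun k ω => (C k ω, T k ω)) μ)
  (hident : ∀ k, IdentDistrib (fun ω => (C k ω, T k ω)) (fun ω => (C 0 ω, T 0 ω)) μ μ)
include hmeas hindep hident

lemma map_pair_S (n m : ℕ) :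
    μ.map (fun ω => ((C m ω, T m ω), S C T n (m+1) ω))
      = (μ.map fun ω => (C 0 ω, T 0 ω)).prod (μ.map (S C T n (m+1))) := by
  rw [(indepFun_iff_map_prod_eq_prod_map_map (hmeas m).aemeasurable
      (measurable_S hmeas n (m+1)).aemeasurable).mp
      (indepFun_of_Mc hmeas hindep (measurable_Mc_S n m)), (hident m).map_eq]

lemma map_S_succ (n m : ℕ) :
    μ.map (S C T (n+1) m)
      = ((μ.map fun ω => (C 0 ω, T 0 ω)).prod (μ.map (S C T n (m+1)))).map phi := by
  have h1 : S C T (n+1) m = fun ω => phi ((C m ω, T m ω), S C T n (m+1) ω) :=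
    funext fun ω => S_rec n m ω
  rw [h1, ← map_pair_S hmeas hindep hident n m,
    Measure.map_map measurable_phi ((hmeas m).prodMk (measurable_S hmeas n (m+1)))]
  rfl

lemma map_S_eq (n m : ℕ) : μ.map (S C T n m) = μ.map (S C T n 0) := by
  induction n generalizing m with
  | zero =>
    have h : S C T 0 m = S C T 0 0 := funext fun ω => by simp [S]
    rw [h]
  | succ n ih =>
    rw [map_S_succ hmeas hindep hident n m, map_S_succ hmeas hindep hident n 0,
      ih (m+1), ih (0+1)]

lemma map_S_succ0 (n : ℕ) :
    μ.map (S C T (n+1) 0)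
      = ((μ.map fun ω => (C 0 ω, T 0 ω)).prod (μ.map (S C T n 0))).map phi := by
  rw [map_S_succ hmeas hindep hident n 0, map_S_eq hmeas hindep hident n (0+1)]

lemma meas_S_Iic (n m : ℕ) (t : ℝ≥0∞) :
    μ (S C T n m ⁻¹' Iic t) = μ (S C T n 0 ⁻¹' Iic t) := by
  rw [← Measure.map_apply (measurable_S hmeas n m) measurableSet_Iic,
    ← Measure.map_apply (measurable_S hmeas n 0) measurableSet_Iic,
    map_S_eq hmeas hindep hident n m]

lemma tendsto_meas_S_W (m : ℕ) (t : ℝ≥0∞) :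
    Tendsto (fun n => μ (S C T n m ⁻¹' Iic t)) atTop (𝓝 (μ (W C T m ⁻¹' Iic t))) := by
  have hInter : ⋂ n, S C T n m ⁻¹' Iic t = W C T m ⁻¹' Iic t := by
    ext ω
    simp only [mem_iInter, mem_preimage, mem_Iic, W_eq_iSup, iSup_le_iff]
  rw [← hInter]
  exact tendsto_measure_iInter_atTop
    (fun n => ((measurable_S hmeas n m) measurableSet_Iic).nullMeasurableSet)
    (fun a b hab ω hω => le_trans (S_mono m ω hab) hω) ⟨0, measure_ne_top _ _⟩

lemma map_W_eq (m : ℕ) : μ.map (W C T m) = μ.map (W C T 0) := by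
  haveI : IsProbabilityMeasure (μ.map (W C T m)) :=
    Measure.isProbabilityMeasure_map (measurable_W hmeas m).aemeasurable
  refine Measure.ext_of_Iic _ _ fun t => ?_
  rw [Measure.map_apply (measurable_W hmeas m) measurableSet_Iic,
    Measure.map_apply (measurable_W hmeas 0) measurableSet_Iic]
  have hm := tendsto_meas_S_W hmeas hindep hident m t
  have h0 := tendsto_meas_S_W hmeas hindep hident 0 t
  have he : (fun n => μ (S C T n m ⁻¹' Iic t)) = fun n => μ (S C T n 0 ⁻¹' Iic t) :=
    funext fun n => meas_S_Iic hmeas hindep hident n m t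
  rw [he] at hm
  exact tendsto_nhds_unique hm h0

lemma map_W_fix :
    μ.map (W C T 0)
      = ((μ.map fun ω => (C 0 ω, T 0 ω)).prod (μ.map (W C T 0))).map phi := by
  have h1 : W C T 0 = fun ω => phi ((C 0 ω, T 0 ω), W C T (0+1) ω) :=
    funext fun ω => W_rec 0 ω
  have h2 : μ.map (fun ω => ((C 0 ω, T 0 ω), W C T (0+1) ω))
      = (μ.map fun ω => (C 0 ω, T 0 ω)).prod (μ.map (W C T (0+1))) :=
    (indepFun_iff_map_prod_eq_prod_map_map (hmeas 0).aemeasurable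
      (measurable_W hmeas (0+1)).aemeasurable).mp
      (indepFun_of_Mc hmeas hindep (measurable_Mc_W 0))
  conv_lhs => rw [h1]
  rw [← map_W_eq hmeas hindep hident (0+1), ← h2,
    Measure.map_map measurable_phi ((hmeas 0).prodMk (measurable_W hmeas (0+1)))]
  rfl

end law

end PerpetuityProof

open Filter Topology in
open PerpetuityProof in
theorem perpetuity_fixed_points
    {Ω : Type*} [MeasurableSpace Ω] (μ : Measure Ω) [IsProbabilityMeasure μ]
    -- i.i.d. copies `(C_k, T_{1,k})` of the pair `(C, T₁)`
    (C T : ℕ → Ω → ℝ≥0∞)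
    (hmeas : ∀ k, Measurable fun ω => (C k ω, T k ω))
    (hindep : iIndepFun (fun k ω => (C k ω, T k ω)) μ)
    (hident : ∀ k, IdentDistrib (fun ω => (C k ω, T k ω)) (fun ω => (C 0 ω, T 0 ω)) μ μ)
    -- non-degeneracy: `P(T₁ = 1, C = 0) < 1`
    (hnondeg : μ {ω | T 0 ω = 1 ∧ C 0 ω = 0} < 1) :
    -- with `Π_k = T_{1,0} ⋯ T_{1,k-1}` and `W* = Σ_{k≥0} Π_k C_k`:
    (∀ P : Measure ℝ≥0∞, IsProbabilityMeasure P → P {∞} = 0 →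
      IsPerpetuityFixedPoint (μ.map fun ω => (C 0 ω, T 0 ω)) P →
      ∀ t : ℝ≥0∞,
        μ {ω | t < ∑' k : ℕ, (∏ j ∈ Finset.range k, T j ω) * C k ω} ≤ P {x | t < x})
    ∧ ((∃ P : Measure ℝ≥0∞, IsProbabilityMeasure P ∧ P {∞} = 0 ∧
          IsPerpetuityFixedPoint (μ.map fun ω => (C 0 ω, T 0 ω)) P)
        ↔ (∀ᵐ ω ∂μ, (∑' k : ℕ, (∏ j ∈ Finset.range k, T j ω) * C k ω) < ∞)) := by
  classical
  have hW0 : ∀ ω, W C T 0 ω = ∑' k : ℕ, (∏ j ∈ Finset.range k, T j ω) * C k ω := by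
    intro ω; simp only [W, Nat.zero_add]
  set κ : Measure (ℝ≥0∞ × ℝ≥0∞) := μ.map (fun ω => (C 0 ω, T 0 ω)) with hκdef
  haveI : IsProbabilityMeasure κ := Measure.isProbabilityMeasure_map (hmeas 0).aemeasurable
  have part1 : ∀ P : Measure ℝ≥0∞, IsProbabilityMeasure P → P {∞} = 0 →
      IsPerpetuityFixedPoint κ P →
      ∀ t : ℝ≥0∞,
        μ {ω | t < ∑' k : ℕ, (∏ j ∈ Finset.range k, T j ω) * C k ω} ≤ P {x | t < x} := by
    rintro P hP hPtop ⟨Ω', mΩ', μ', hμ', CT, X, hCT, hX, hκ', hXP, hind', hfix⟩ t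
    haveI := hP
    haveI := hμ'
    have hPfix : (κ.prod P).map phi = P := by
      have h2 : μ'.map (fun ω' => (CT ω', X ω')) = κ.prod P := by
        rw [(indepFun_iff_map_prod_eq_prod_map_map hCT.aemeasurable hX.aemeasurable).mp hind',
          hκ', hXP]
      calc (κ.prod P).map phi
          = (μ'.map (fun ω' => (CT ω', X ω'))).map phi := by rw [h2]
        _ = μ'.map (fun ω' => phi (CT ω', X ω')) :=
            Measure.map_map measurable_phi (hCT.prodMk hX)
        _ = P := hfix
    have hsurv : ∀ n (t : ℝ≥0∞), μ.map (S C T n 0) (Set.Ioi t) ≤ P (Set.Ioi t) := by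
      intro n
      induction n with
      | zero =>
        intro t
        rw [Measure.map_apply (measurable_S hmeas 0 0) measurableSet_Ioi]
        have he : S C T 0 0 ⁻¹' Set.Ioi t = ∅ := by
          ext ω; simp [S]
        rw [he]
        simp
      | succ n ih =>
        intro t
        haveI : IsProbabilityMeasure (μ.map (S C T n 0)) :=
          Measure.isProbabilityMeasure_map (measurable_S hmeas n 0).aemeasurable
        rw [map_S_succ0 hmeas hindep hident n]
        calc ((κ.prod (μ.map (S C T n 0))).map phi) (Set.Ioi t)
            ≤ ((κ.prod P).map phi) (Set.Ioi t) := map_phi_mono κ ih t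
          _ = P (Set.Ioi t) := by rw [hPfix]
    have hset : {ω | t < ∑' k : ℕ, (∏ j ∈ Finset.range k, T j ω) * C k ω}
        = ⋃ n, S C T n 0 ⁻¹' Set.Ioi t := by
      ext ω
      simp only [Set.mem_setOf_eq, ← hW0, Set.mem_iUnion, Set.mem_preimage, Set.mem_Ioi,
        W_eq_iSup, lt_iSup_iff]
    have hmono : Monotone fun n => S C T n 0 ⁻¹' Set.Ioi t :=
      fun a b hab ω hω => lt_of_lt_of_le hω (S_mono 0 ω hab)
    rw [hset, Directed.measure_iUnion hmono.directed_le]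
    refine iSup_le fun n => ?_
    rw [← Measure.map_apply (measurable_S hmeas n 0) measurableSet_Ioi]
    exact hsurv n t
  refine ⟨part1, ?_, ?_⟩
  · rintro ⟨P, hP, hPtop, hfp⟩
    haveI := hP
    rw [ae_iff]
    have hiInf : ⋂ n : ℕ, Set.Ioi ((n : ℕ) : ℝ≥0∞) = {∞} := by
      ext x
      simp only [Set.mem_iInter, Set.mem_Ioi, Set.mem_singleton_iff]
      constructor
      · intro h
        by_contra hx
        obtain ⟨n, hn⟩ := ENNReal.exists_nat_gt hx
        exact absurd (h n) (not_lt.mpr hn.le)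
      · rintro rfl n
        exact ENNReal.natCast_lt_top n
    have htendP : Tendsto (fun n : ℕ => P (Set.Ioi ((n : ℕ) : ℝ≥0∞))) atTop (𝓝 (P {∞})) := by
      rw [← hiInf]
      exact tendsto_measure_iInter_atTop (fun n => measurableSet_Ioi.nullMeasurableSet)
        (fun a b hab => Set.Ioi_subset_Ioi (by exact_mod_cast hab)) ⟨0, measure_ne_top _ _⟩
    have hbound : ∀ n : ℕ,
        μ {ω | ¬ (∑' k : ℕ, (∏ j ∈ Finset.range k, T j ω) * C k ω) < ∞}
          ≤ P (Set.Ioi ((n : ℕ) : ℝ≥0∞)) := by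
      intro n
      refine le_trans (measure_mono ?_) (part1 P hP hPtop hfp ((n : ℕ) : ℝ≥0∞))
      intro ω hω
      have hω' : (∑' k : ℕ, (∏ j ∈ Finset.range k, T j ω) * C k ω) = ∞ :=
        top_le_iff.mp (not_lt.mp hω)
      show ((n : ℕ) : ℝ≥0∞) < _
      rw [hω']
      exact ENNReal.natCast_lt_top n
    have hle : μ {ω | ¬ (∑' k : ℕ, (∏ j ∈ Finset.range k, T j ω) * C k ω) < ∞} ≤ P {∞} :=
      ge_of_tendsto htendP (Eventually.of_forall hbound)
    rw [hPtop] at hle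
    exact le_antisymm hle zero_le
  · intro hfin
    haveI : IsProbabilityMeasure (μ.map (W C T 0)) :=
      Measure.isProbabilityMeasure_map (measurable_W hmeas 0).aemeasurable
    refine ⟨μ.map (W C T 0), inferInstance, ?_, ?_⟩
    · rw [Measure.map_apply (measurable_W hmeas 0) (measurableSet_singleton ∞)]
      refine measure_mono_null ?_ (ae_iff.mp hfin)
      intro ω hω
      show ¬ _ < ∞
      rw [← hW0 ω]
      simp only [Set.mem_preimage, Set.mem_singleton_iff] at hω
      rw [hω]
      exact lt_irrefl _
    · refine ⟨(ℝ≥0∞ × ℝ≥0∞) × ℝ≥0∞, inferInstance, κ.prod (μ.map (W C T 0)), inferInstance,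
        Prod.fst, Prod.snd, measurable_fst, measurable_snd, ?_, ?_, ?_, ?_⟩
      · rw [Measure.map_fst_prod, measure_univ, one_smul]
      · rw [Measure.map_snd_prod, measure_univ, one_smul]
      · refine (indepFun_iff_map_prod_eq_prod_map_map measurable_fst.aemeasurable
          measurable_snd.aemeasurable).mpr ?_
        rw [Measure.map_fst_prod, Measure.map_snd_prod, measure_univ, measure_univ,
          one_smul, one_smul]
        have : (fun p : (ℝ≥0∞ × ℝ≥0∞) × ℝ≥0∞ => (p.1, p.2)) = id := funext fun p => rfl
        rw [this, Measure.map_id]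
      · exact (map_W_fix hmeas hindep hident).symm
end
end
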